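/- For every d ≥ 1, t ≥ 1, every complex d × d matrix M, and every permutation π of Fin t, the trace Tr[W_π · M^{⊗t}] equals the product, over the orbits O of π acting on Fin t, of Tr[M^{|O|}] (fixed points contributing a factor Tr[M]). In particular, for π a single t-cycle, Tr[W_π M^{⊗t}] = Tr[M^t]. -/

import Mathlib

open Matrix

noncomputable section

/-- Permutation operator `W_π` of local index `I`: `W_π[b,a] = 1` iff `b = a ∘ π`. -/
def permOp (I : Type*) [DecidableEq I] {t : ℕ} (π : Equiv.Perm (Fin t)) :
    Matrix (Fin t → I) (Fin t → I) ℂ :=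
  Matrix.of fun b a => if b = a ∘ ⇑π then 1 else 0

/-- `t`-fold Kronecker power of a matrix. -/
def kpow {I : Type*} (M : Matrix I I ℂ) (t : ℕ) :
    Matrix (Fin t → I) (Fin t → I) ℂ :=
  Matrix.of fun a b => ∏ i, M (a i) (b i)

lemma pow_entry_path {I : Type*} [Fintype I] [DecidableEq I] (M : Matrix I I ℂ) (n : ℕ) :
    ∀ x y : I, (M ^ (n + 1)) x y = ∑ g : Fin n → I, ∏ j : Fin (n + 1),
      M ((Fin.cons x (Fin.snoc g y) : Fin (n + 2) → I) j.castSucc)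
        ((Fin.cons x (Fin.snoc g y) : Fin (n + 2) → I) j.succ) := by
  induction n with
  | zero =>
    intro x y
    have h0 : (Fin.snoc (default : Fin 0 → I) y : Fin 1 → I) 0 = y := by
      rw [show (0 : Fin 1) = Fin.last 0 from rfl, Fin.snoc_last]
    simp [Fin.prod_univ_one, h0]
  | succ n ih =>
    intro x y
    rw [pow_succ', Matrix.mul_apply]
    simp_rw [ih]
    rw [← Equiv.sum_comp (Fin.consEquiv fun _ : Fin (n + 1) => I), Fintype.sum_prod_type]
    refine Finset.sum_congr rfl fun z _ => ?_
    rw [Finset.mul_sum]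
    refine Finset.sum_congr rfl fun g _ => ?_
    have hP : (Fin.cons x (Fin.snoc (Fin.consEquiv (fun _ : Fin (n+1) => I) (z, g)) y) : Fin (n + 3) → I)
        = Fin.cons x (Fin.cons z (Fin.snoc g y)) := by
      have : (Fin.consEquiv (fun _ : Fin (n+1) => I)) (z, g) = Fin.cons z g := rfl
      rw [this]
      conv_rhs => rw [Fin.cons_snoc_eq_snoc_cons]
    rw [hP]
    conv_rhs => rw [Fin.prod_univ_succ]
    congr 1

lemma trace_pow_rotate {I : Type*} [Fintype I] [DecidableEq I] (M : Matrix I I ℂ) (n : ℕ) :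
    (M ^ (n + 1)).trace
      = ∑ h : Fin (n + 1) → I, ∏ j : Fin (n + 1), M (h j) (h (finRotate (n + 1) j)) := by
  rw [Matrix.trace]
  simp only [Matrix.diag, pow_entry_path]
  rw [← Equiv.sum_comp (Fin.consEquiv fun _ : Fin (n + 1) => I)
    (fun h => ∏ j, M (h j) (h (finRotate (n + 1) j))), Fintype.sum_prod_type]
  refine Finset.sum_congr rfl fun x _ => Finset.sum_congr rfl fun g _ => ?_
  have hc : (Fin.consEquiv fun _ : Fin (n + 1) => I) (x, g) = Fin.cons x g := rfl
  rw [hc]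
  refine Finset.prod_congr rfl fun j _ => ?_
  congr 1
  · induction j using Fin.cases with
    | zero => rw [Fin.castSucc_zero, Fin.cons_zero, Fin.cons_zero]
    | succ i => rw [← Fin.succ_castSucc, Fin.cons_succ, Fin.cons_succ, Fin.snoc_castSucc]
  · induction j using Fin.lastCases with
    | last => rw [Fin.cons_succ, Fin.snoc_last, finRotate_last, Fin.cons_zero]
    | cast i => rw [Fin.cons_succ, Fin.snoc_castSucc, finRotate_succ_apply,
        Fin.coeSucc_eq_succ, Fin.cons_succ]

lemma trace_pow_zmod {I : Type*} [Fintype I] [DecidableEq I] (M : Matrix I I ℂ) (n : ℕ)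
    [NeZero n] :
    (M ^ n).trace = ∑ h : ZMod n → I, ∏ j : ZMod n, M (h j) (h (j + 1)) := by
  obtain ⟨m, rfl⟩ := Nat.exists_eq_succ_of_ne_zero (NeZero.ne n)
  rw [trace_pow_rotate]
  simp only [finRotate_succ_apply]
  rfl

lemma orbit_trace {t d : ℕ} (π : Equiv.Perm (Fin t)) (M : Matrix (Fin d) (Fin d) ℂ)
    (O : MulAction.orbitRel.Quotient (Subgroup.zpowers π) (Fin t))
    [Fintype O.orbit] (hmem : ∀ j : O.orbit, π ↑j ∈ O.orbit) :
    ∑ h : O.orbit → Fin d, ∏ j : O.orbit, M (h j) (h ⟨π ↑j, hmem j⟩)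
      = (M ^ O.orbit.ncard).trace := by
  classical
  have horb : O.orbit = MulAction.orbit (Subgroup.zpowers π) (Quotient.out O) :=
    MulAction.orbitRel.Quotient.orbit_eq_orbit_out O Quotient.out_eq'
  set b := Quotient.out O with hb
  set n := Function.minimalPeriod (π • ·) b with hn
  haveI : Finite (MulAction.orbit (Subgroup.zpowers π) b) := Subtype.finite
  haveI : NeZero n := MulAction.minimalPeriod_pos π b
  let e : O.orbit ≃ ZMod n :=
    (Equiv.setCongr horb).trans (MulAction.orbitZPowersEquiv π b)
  have hcard : O.orbit.ncard = n := by
    rw [← Nat.card_coe_set_eq, Nat.card_congr e, Nat.card_zmod]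
  have hval : ∀ j : ℤ, ((e.symm ((j : ZMod n)) : O.orbit) : Fin t) = (π ^ j) b := by
    intro j
    show (((MulAction.orbitZPowersEquiv π b).symm ((j : ZMod n)) : _) : Fin t) = _
    rw [MulAction.orbitZPowersEquiv_symm_apply']
    rfl
  have key : ∀ k : ZMod n, (⟨π ↑(e.symm k), hmem (e.symm k)⟩ : O.orbit) = e.symm (k + 1) := by
    intro k
    obtain ⟨j, rfl⟩ : ∃ j : ℤ, (j : ZMod n) = k := ⟨(ZMod.cast k : ℤ), ZMod.intCast_zmod_cast k⟩
    apply Subtype.ext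
    show π ↑(e.symm ((j : ZMod n))) = ↑(e.symm ((j : ZMod n) + 1))
    rw [hval j, show ((j : ZMod n) + 1) = ((1 + j : ℤ) : ZMod n) by push_cast; ring,
      hval (1 + j), _root_.zpow_one_add]
    rfl
  rw [hcard, trace_pow_zmod M n]
  refine Fintype.sum_equiv (Equiv.arrowCongr e (Equiv.refl (Fin d))) _ _ ?_
  intro h
  rw [← Equiv.prod_comp e.symm (fun j : O.orbit => M (h j) (h ⟨π ↑j, hmem j⟩))]
  refine Finset.prod_congr rfl fun k _ => ?_
  rw [key k]
  rfl

theorem stmt_4 (d t : ℕ) (hd : 1 ≤ d) (ht : 1 ≤ t)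
    (M : Matrix (Fin d) (Fin d) ℂ) (π : Equiv.Perm (Fin t)) :
    (permOp (Fin d) π * kpow M t).trace =
      ∏ᶠ O : MulAction.orbitRel.Quotient (Subgroup.zpowers π) (Fin t),
        (M ^ O.orbit.ncard).trace := by
  classical
  letI : Fintype (MulAction.orbitRel.Quotient (Subgroup.zpowers π) (Fin t)) :=
    Fintype.ofFinite _
  letI : ∀ O : MulAction.orbitRel.Quotient (Subgroup.zpowers π) (Fin t), Fintype O.orbit :=
    fun _ => Fintype.ofFinite _
  have hmem : ∀ (O : MulAction.orbitRel.Quotient (Subgroup.zpowers π) (Fin t))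
      (j : O.orbit), π ↑j ∈ O.orbit := fun O j =>
    MulAction.orbitRel.Quotient.mapsTo_smul_orbit
      (⟨π, Subgroup.mem_zpowers π⟩ : Subgroup.zpowers π) O j.2
  have step1 : (permOp (Fin d) π * kpow M t).trace
      = ∑ a : Fin t → Fin d, ∏ i, M (a i) (a (π i)) := by
    rw [Matrix.trace]
    simp only [Matrix.diag, Matrix.mul_apply, permOp, kpow, Matrix.of_apply]
    refine Finset.sum_congr rfl fun a _ => ?_
    rw [Finset.sum_eq_single (a ∘ ⇑π.symm)]
    · have hcomp : a = (a ∘ ⇑π.symm) ∘ ⇑π := by funext i; simp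
      rw [if_pos hcomp, one_mul]
      exact Fintype.prod_equiv π.symm _ _ (fun i => by simp)
    · intro b _ hb
      rw [if_neg, zero_mul]
      intro hab
      exact hb (by funext i; simp [hab])
    · intro habs
      exact absurd (Finset.mem_univ _) habs
  have step2 : ∀ a : Fin t → Fin d, (∏ i, M (a i) (a (π i)))
      = ∏ O : MulAction.orbitRel.Quotient (Subgroup.zpowers π) (Fin t),
          ∏ j : O.orbit, M (a ↑j) (a (π ↑j)) := by
    intro a
    rw [← Fintype.prod_fiberwise (Quotient.mk'' :
      Fin t → MulAction.orbitRel.Quotient (Subgroup.zpowers π) (Fin t))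
      (fun i => M (a i) (a (π i)))]
    refine Finset.prod_congr rfl fun O _ => ?_
    refine Fintype.prod_equiv (Equiv.subtypeEquivRight (p := fun i => Quotient.mk'' i = O)
        (q := fun i => i ∈ MulAction.orbitRel.Quotient.orbit O) fun i => (MulAction.orbitRel.Quotient.mem_orbit).symm)
      (fun j => M (a ↑j) (a (π ↑j))) (fun j => M (a ↑j) (a (π ↑j))) (fun j => rfl)
  let E : (∀ O : MulAction.orbitRel.Quotient (Subgroup.zpowers π) (Fin t), O.orbit → Fin d)
      ≃ (Fin t → Fin d) :=
    { toFun := fun g i => g (Quotient.mk'' i) ⟨i, (MulAction.orbitRel.Quotient.mem_orbit).2 rfl⟩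
      invFun := fun a O j => a ↑j
      left_inv := by
        intro g; funext O j
        obtain ⟨j, hj⟩ := j
        obtain rfl := (MulAction.orbitRel.Quotient.mem_orbit).1 hj
        rfl
      right_inv := fun a => rfl }
  have hE : ∀ (g) (O : MulAction.orbitRel.Quotient (Subgroup.zpowers π) (Fin t))
      (j : O.orbit), E g ↑j = g O j := by
    intro g O j
    obtain ⟨j, hj⟩ := j
    obtain rfl := (MulAction.orbitRel.Quotient.mem_orbit).1 hj
    rfl
  rw [step1]
  rw [Finset.sum_congr rfl fun a _ => step2 a]
  rw [← Equiv.sum_comp E (fun a : Fin t → Fin d =>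
    ∏ O : MulAction.orbitRel.Quotient (Subgroup.zpowers π) (Fin t),
      ∏ j : O.orbit, M (a ↑j) (a (π ↑j)))]
  rw [Finset.sum_congr rfl fun g _ => Finset.prod_congr rfl fun O _ =>
    Finset.prod_congr rfl fun j _ => by
      rw [show (E g (π ↑j)) = E g ↑(⟨π ↑j, hmem O j⟩ : O.orbit) from rfl, hE, hE]]
  rw [← Fintype.piFinset_univ]
  rw [← Finset.prod_univ_sum (fun _ => Finset.univ)
    (fun (O : MulAction.orbitRel.Quotient (Subgroup.zpowers π) (Fin t)) (h : O.orbit → Fin d) =>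
      ∏ j : O.orbit, M (h j) (h ⟨π ↑j, hmem O j⟩))]
  rw [finprod_eq_prod_of_fintype]
  exact Finset.prod_congr rfl fun O _ => orbit_trace π M O (hmem O)
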